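/- Let U be a complex unitary matrix written in 2×2 block form U = [[A, B], [C, D]] with A and D square blocks (possibly of different sizes), and suppose A and D are invertible. Then det(I − A⁻¹ B D⁻¹ C) is a real positive number; in fact det(I − A⁻¹ B D⁻¹ C) = 1/|det A|². -/

import Mathlib

open Matrix

/-- For a unitary block matrix `[[A, B], [C, D]]` with `A` and `D` square and invertible,
`det (I − A⁻¹ B D⁻¹ C)` is a positive real number, namely `1 / |det A|²`. -/
theorem det_one_sub_schur_real_pos {k l : ℕ}
    (A : Matrix (Fin k) (Fin k) ℂ) (B : Matrix (Fin k) (Fin l) ℂ)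
    (C : Matrix (Fin l) (Fin k) ℂ) (D : Matrix (Fin l) (Fin l) ℂ)
    (hU : (fromBlocks A B C D)ᴴ * fromBlocks A B C D = 1)
    (hA : IsUnit A.det) (hD : IsUnit D.det) :
    (1 - A⁻¹ * B * D⁻¹ * C).det = ((1 / ‖A.det‖ ^ 2 : ℝ) : ℂ) := by
  have hU2 : fromBlocks A B C D * (fromBlocks A B C D)ᴴ = 1 :=
    mul_eq_one_comm.mp hU
  rw [fromBlocks_conjTranspose, fromBlocks_multiply, ← fromBlocks_one] at hU hU2
  have e1 : Bᴴ * A + Dᴴ * C = 0 := by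
    simpa only [Matrix.toBlocks_fromBlocks₂₁] using congrArg Matrix.toBlocks₂₁ hU
  have e2 : Bᴴ * B + Dᴴ * D = 1 := by
    simpa only [Matrix.toBlocks_fromBlocks₂₂] using congrArg Matrix.toBlocks₂₂ hU
  have e3 : C * Cᴴ + D * Dᴴ = 1 := by
    simpa only [Matrix.toBlocks_fromBlocks₂₂] using congrArg Matrix.toBlocks₂₂ hU2
  have e4 : Aᴴ * A + Cᴴ * C = 1 := by
    simpa only [Matrix.toBlocks_fromBlocks₁₁] using congrArg Matrix.toBlocks₁₁ hU
  have hDH : IsUnit Dᴴ.det := by rw [det_conjTranspose]; exact hD.star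
  have hDC : Dᴴ * C = -(Bᴴ * A) := eq_neg_of_add_eq_zero_right e1
  have hC : C = -((Dᴴ)⁻¹ * (Bᴴ * A)) := by
    calc C = (Dᴴ)⁻¹ * (Dᴴ * C) := by
            rw [← Matrix.mul_assoc, Matrix.nonsing_inv_mul _ hDH, Matrix.one_mul]
    _ = -((Dᴴ)⁻¹ * (Bᴴ * A)) := by rw [hDC, Matrix.mul_neg]
  have key : 1 - A⁻¹ * B * D⁻¹ * C = A⁻¹ * (1 + B * (Dᴴ * D)⁻¹ * Bᴴ) * A := by
    rw [hC, Matrix.mul_inv_rev, Matrix.mul_add, Matrix.add_mul, Matrix.mul_one,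
      Matrix.nonsing_inv_mul _ hA]
    simp [Matrix.mul_assoc]
  have hA0 : A.det ≠ 0 := hA.ne_zero
  have hdet1 : (1 - A⁻¹ * B * D⁻¹ * C).det = (1 + B * (Dᴴ * D)⁻¹ * Bᴴ).det := by
    rw [key, det_mul, det_mul, Matrix.det_nonsing_inv, Ring.inverse_eq_inv]
    field_simp
  have hDD : IsUnit (Dᴴ * D).det := by
    rw [det_mul, det_conjTranspose]; exact hD.star.mul hD
  have hsum : Dᴴ * D + Bᴴ * B = 1 := by rw [add_comm]; exact e2
  have hdet2 : (1 + B * (Dᴴ * D)⁻¹ * Bᴴ).det = ((Dᴴ * D)⁻¹).det := by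
    rw [Matrix.mul_assoc, det_one_add_mul_comm]
    congr 1
    rw [Matrix.mul_assoc, ← Matrix.nonsing_inv_mul _ hDD, ← Matrix.mul_add, hsum, Matrix.mul_one]
  have hDDA : (Dᴴ * D).det = (Aᴴ * A).det := by
    have hDDh : D * Dᴴ = 1 - C * Cᴴ := by
      rw [eq_sub_iff_add_eq, add_comm]; exact e3
    have hAAh : (1 : Matrix (Fin k) (Fin k) ℂ) - Cᴴ * C = Aᴴ * A := by
      rw [sub_eq_iff_eq_add, ← e4, add_comm]
    calc (Dᴴ * D).det = (D * Dᴴ).det := by rw [det_mul, det_mul, mul_comm]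
    _ = (1 - C * Cᴴ).det := by rw [hDDh]
    _ = (1 + (-C) * Cᴴ).det := by rw [Matrix.neg_mul, ← sub_eq_add_neg]
    _ = (1 + Cᴴ * (-C)).det := det_one_add_mul_comm _ _
    _ = (Aᴴ * A).det := by rw [Matrix.mul_neg, ← sub_eq_add_neg, hAAh]
  have habs : (Aᴴ * A).det = ((‖A.det‖ ^ 2 : ℝ) : ℂ) := by
    rw [det_mul, det_conjTranspose, Complex.sq_norm, Complex.star_def, mul_comm,
      Complex.mul_conj]
  rw [hdet1, hdet2, Matrix.det_nonsing_inv, Ring.inverse_eq_inv, hDDA, habs]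
  push_cast
  rw [one_div]
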